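/- Let A be an n×n real orthogonal matrix, Ω ⊆ {1,…,n}, T a column index set, and η ∈ (0,1], ε ∈ [0, 1/2]. Suppose ‖I − η⁻¹ A_{ΩT}ᵀ A_{ΩT}‖ ≤ ε. Then for every vector u, (η/2) ‖A_{ΩᶜT}ᵀ u‖₂² ≤ ‖A_{ΩT} A_{ΩᶜT}ᵀ u‖₂². -/

import Mathlib

open Matrix
open scoped RealInnerProductSpace

/-- Spectral (ℓ²→ℓ² operator) norm of a real matrix. -/
noncomputable def specNorm {α β : Type*} [Fintype α] [Fintype β] [DecidableEq β]
    (B : Matrix α β ℝ) : ℝ :=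
  ‖LinearMap.toContinuousLinearMap (Matrix.toEuclideanLin B)‖

/-- Euclidean (ℓ²) norm of a finitely indexed real vector. -/
noncomputable def l2 {α : Type*} [Fintype α] (v : α → ℝ) : ℝ := Real.sqrt (∑ i, v i ^ 2)

/-- ℓ¹ norm of a finitely indexed real vector. -/
def l1 {α : Type*} [Fintype α] (v : α → ℝ) : ℝ := ∑ i, |v i|

/-- Submatrix of `A` with rows indexed by `J` and columns indexed by `T`. -/
def sub {n : ℕ} (A : Matrix (Fin n) (Fin n) ℝ) (J T : Finset (Fin n)) :
    Matrix J T ℝ := A.submatrix (fun i => (i : Fin n)) (fun j => (j : Fin n))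

/-- Submatrix of `A` with rows indexed by `J` (all columns kept). -/
def rowSub {n : ℕ} (A : Matrix (Fin n) (Fin n) ℝ) (J : Finset (Fin n)) :
    Matrix J (Fin n) ℝ := A.submatrix (fun i => (i : Fin n)) id

lemma l2_sq {α : Type*} [Fintype α] (v : α → ℝ) : l2 v ^ 2 = ∑ i, v i ^ 2 :=
  Real.sq_sqrt (Finset.sum_nonneg fun i _ => sq_nonneg _)

theorem stmt8 {n : ℕ} (A : Matrix (Fin n) (Fin n) ℝ) (hA : Aᵀ * A = 1)
    (Ω T : Finset (Fin n)) (η ε : ℝ) (hη0 : 0 < η) (hη1 : η ≤ 1)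
    (hε0 : 0 ≤ ε) (hε : ε ≤ 1 / 2)
    (hnorm : specNorm ((1 : Matrix T T ℝ) - η⁻¹ • ((sub A Ω T)ᵀ * sub A Ω T)) ≤ ε)
    (u : ↥(Ωᶜ) → ℝ) :
    (η / 2) * l2 ((sub A Ωᶜ T)ᵀ.mulVec u) ^ 2 ≤
      l2 ((sub A Ω T).mulVec ((sub A Ωᶜ T)ᵀ.mulVec u)) ^ 2 := by
  set B := sub A Ω T
  set v : ↥T → ℝ := (sub A Ωᶜ T)ᵀ.mulVec u with hv
  set M : Matrix ↥T ↥T ℝ := (1 : Matrix T T ℝ) - η⁻¹ • (Bᵀ * B) with hM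
  set V : EuclideanSpace ℝ ↥T := (WithLp.equiv 2 _).symm v with hV
  have hVnorm : ‖V‖ ^ 2 = ∑ i, v i ^ 2 := by
    rw [EuclideanSpace.norm_eq, Real.sq_sqrt (Finset.sum_nonneg fun i _ => sq_nonneg _)]
    simp only [hV, WithLp.equiv_symm_apply, WithLp.ofLp_toLp, Real.norm_eq_abs, sq_abs]
  -- quadratic form bound
  have hbound : |(inner ℝ V ((Matrix.toEuclideanLin M) V) : ℝ)| ≤ ε * ‖V‖ ^ 2 := by
    calc |(inner ℝ V ((Matrix.toEuclideanLin M) V) : ℝ)| ≤ ‖V‖ * ‖(Matrix.toEuclideanLin M) V‖ :=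
          abs_real_inner_le_norm _ _
      _ ≤ ‖V‖ * (specNorm M * ‖V‖) := by
          apply mul_le_mul_of_nonneg_left _ (norm_nonneg _)
          exact ((LinearMap.toContinuousLinearMap (Matrix.toEuclideanLin M)).le_opNorm V)
      _ ≤ ‖V‖ * (ε * ‖V‖) := by
          apply mul_le_mul_of_nonneg_left (mul_le_mul_of_nonneg_right hnorm (norm_nonneg _))
            (norm_nonneg _)
      _ = ε * ‖V‖ ^ 2 := by ring
  have hinner : (inner ℝ V ((Matrix.toEuclideanLin M) V) : ℝ)
      = ∑ i, v i ^ 2 - η⁻¹ * ∑ i, (B.mulVec v i) ^ 2 := by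
    rw [hV, WithLp.equiv_symm_apply, Matrix.toEuclideanLin_apply_piLp_toLp,
      EuclideanSpace.inner_toLp_toLp, dotProduct_comm]
    have : M.mulVec v = v - η⁻¹ • (Bᵀ.mulVec (B.mulVec v)) := by
      rw [hM, Matrix.sub_mulVec, Matrix.smul_mulVec, Matrix.one_mulVec,
        ← Matrix.mulVec_mulVec]
    rw [this]
    simp only [dotProduct, star_trivial, Pi.sub_apply, Pi.smul_apply, smul_eq_mul]
    have key : ∑ x, v x * ((Bᵀ *ᵥ (B *ᵥ v)) x) = ∑ i, (B *ᵥ v) i ^ 2 := by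
      have h1 : v ⬝ᵥ (Bᵀ *ᵥ (B *ᵥ v)) = (B *ᵥ v) ⬝ᵥ (B *ᵥ v) := by
        rw [Matrix.dotProduct_mulVec, Matrix.vecMul_transpose]
      simpa [dotProduct, sq] using h1
    calc ∑ x, v x * (v x - η⁻¹ * (Bᵀ *ᵥ (B *ᵥ v)) x)
        = ∑ x, (v x ^ 2 - η⁻¹ * (v x * (Bᵀ *ᵥ (B *ᵥ v)) x)) :=
          Finset.sum_congr rfl fun i _ => by ring
      _ = ∑ x, v x ^ 2 - η⁻¹ * ∑ x, v x * (Bᵀ *ᵥ (B *ᵥ v)) x := by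
          rw [Finset.sum_sub_distrib, Finset.mul_sum]
      _ = _ := by rw [key]
  -- arithmetic
  have habs := (abs_le.mp (hinner ▸ hVnorm ▸ hbound)).2
  set a : ℝ := ∑ i, v i ^ 2
  set b : ℝ := ∑ i, (B.mulVec v) i ^ 2
  have ha : 0 ≤ a := Finset.sum_nonneg fun i _ => sq_nonneg _
  rw [l2_sq, l2_sq]
  -- habs : a - η⁻¹ * b ≤ ε * a
  have : (1 - ε) * a ≤ η⁻¹ * b := by linarith
  have h12 : (1/2 : ℝ) * a ≤ η⁻¹ * b := le_trans (by nlinarith) this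
  calc (η/2) * a = η * ((1/2) * a) := by ring
    _ ≤ η * (η⁻¹ * b) := mul_le_mul_of_nonneg_left h12 hη0.le
    _ = b := by field_simp
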